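/- Let 1 ≤ p ≤ q < ∞. The weak type discrete Morrey space wℓ^p_q is complete with respect to the quasi-norm ‖·‖_{wℓ^p_q}: every Cauchy sequence (x^{(n)})_{n∈ℕ} in wℓ^p_q (i.e., for every ε > 0 there is n_ε with ‖x^{(i)} − x^{(j)}‖_{wℓ^p_q} < ε for all i, j ≥ n_ε) converges in the quasi-norm ‖·‖_{wℓ^p_q} to some x ∈ wℓ^p_q. -/

import Mathlib

open scoped ENNReal NNReal BigOperators

/-- The discrete "ball" `S_{m,N} = {m-N, …, m+N}` as a finite set of integers. -/
noncomputable def S (m : ℤ) (N : ℕ) : Finset ℤ := Finset.Icc (m - N) (m + N)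

open Classical in
/-- The cardinality of `{k ∈ S_{m,N} : |x_k| > γ}`. -/
noncomputable def weakCard (x : ℤ → ℂ) (m : ℤ) (N : ℕ) (γ : ℝ≥0) : ℕ :=
  ((S m N).filter (fun k => γ < ‖x k‖₊)).card

/-- The weak type discrete Morrey norm `‖x‖_{wℓ^p_q}`. -/
noncomputable def wMorreyNorm (p q : ℝ) (x : ℤ → ℂ) : ℝ≥0∞ :=
  ⨆ (m : ℤ) (N : ℕ) (γ : ℝ≥0) (_ : 0 < γ),
    (2 * (N : ℝ≥0∞) + 1) ^ (1 / q - 1 / p) * (γ : ℝ≥0∞) *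
      (weakCard x m N γ : ℝ≥0∞) ^ (1 / p)

open Filter Topology

/-- A single term of the supremum defining the weak Morrey norm. -/
noncomputable def wTerm (p q : ℝ) (x : ℤ → ℂ) (m : ℤ) (N : ℕ) (γ : ℝ≥0) : ℝ≥0∞ :=
  (2 * (N : ℝ≥0∞) + 1) ^ (1 / q - 1 / p) * (γ : ℝ≥0∞) *
      (weakCard x m N γ : ℝ≥0∞) ^ (1 / p)

lemma wTerm_le_norm (p q : ℝ) (x : ℤ → ℂ) (m : ℤ) (N : ℕ) {γ : ℝ≥0} (hγ : 0 < γ) :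
    wTerm p q x m N γ ≤ wMorreyNorm p q x := by
  unfold wMorreyNorm
  exact le_iSup_of_le m <| le_iSup_of_le N <| le_iSup_of_le γ <| le_iSup_of_le hγ le_rfl

lemma norm_eq_iSup (p q : ℝ) (x : ℤ → ℂ) :
    wMorreyNorm p q x = ⨆ (m : ℤ) (N : ℕ) (γ : ℝ≥0) (_ : 0 < γ), wTerm p q x m N γ := rfl

open Classical in
lemma weakCard_eq (x : ℤ → ℂ) (m : ℤ) (N : ℕ) (γ : ℝ≥0) :
    weakCard x m N γ = ((S m N).filter (fun k => γ < ‖x k‖₊)).card := rfl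

/-- Pointwise bound: each `‖x k‖₊` is at most the weak Morrey norm. -/
lemma nnnorm_le_norm (p q : ℝ) (x : ℤ → ℂ) (k : ℤ) :
    (‖x k‖₊ : ℝ≥0∞) ≤ wMorreyNorm p q x := by
  classical
  refine ENNReal.le_of_forall_nnreal_lt fun r hr => ?_
  rcases eq_or_lt_of_le (zero_le : (0 : ℝ≥0) ≤ r) with h0 | h0
  · simp [← h0]
  rw [ENNReal.coe_lt_coe] at hr
  have hcard : weakCard x k 0 r = 1 := by
    rw [weakCard_eq]
    have hS : S k 0 = {k} := by
      simp [S]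
    rw [hS, Finset.filter_singleton, if_pos hr, Finset.card_singleton]
  have : wTerm p q x k 0 r = (r : ℝ≥0∞) := by
    simp [wTerm, hcard]
  calc (r : ℝ≥0∞) = wTerm p q x k 0 r := this.symm
    _ ≤ wMorreyNorm p q x := wTerm_le_norm p q x k 0 h0

open Classical in
lemma weakCard_subadd (u v : ℤ → ℂ) (m : ℤ) (N : ℕ) (γ : ℝ≥0) :
    weakCard u m N γ ≤ weakCard (u - v) m N (γ / 2) + weakCard v m N (γ / 2) := by
  rw [weakCard_eq, weakCard_eq, weakCard_eq]
  refine le_trans (Finset.card_le_card ?_) (Finset.card_union_le _ _)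
  intro k hk
  simp only [Finset.mem_filter, Finset.mem_union] at hk ⊢
  obtain ⟨hkS, hkγ⟩ := hk
  by_contra h
  push_neg at h
  obtain ⟨h1, h2⟩ := h
  have h1' := h1 hkS
  have h2' := h2 hkS
  have : ‖u k‖₊ ≤ ‖(u - v) k‖₊ + ‖v k‖₊ := by
    have : u k = (u - v) k + v k := by simp
    rw [this]; exact nnnorm_add_le _ _
  have : ‖u k‖₊ ≤ γ := le_trans this (by
    calc ‖(u - v) k‖₊ + ‖v k‖₊ ≤ γ / 2 + γ / 2 := add_le_add h1' h2'
      _ = γ := by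
        rw [← add_div, ← two_mul, mul_comm, mul_div_assoc, div_self (two_ne_zero), mul_one])
  exact absurd hkγ (not_lt.mpr this)

/-- Quasi-triangle inequality. -/
lemma norm_quasi (p q : ℝ) (hp : 1 ≤ p) (u v : ℤ → ℂ) :
    wMorreyNorm p q u ≤ 2 * (wMorreyNorm p q (u - v) + wMorreyNorm p q v) := by
  have hp0 : 0 < p := lt_of_lt_of_le one_pos hp
  have hinv0 : 0 ≤ 1 / p := by positivity
  have hinv1 : 1 / p ≤ 1 := by
    rw [div_le_one hp0]; exact hp
  rw [norm_eq_iSup]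
  refine iSup_le fun m => iSup_le fun N => iSup_le fun γ => iSup_le fun hγ => ?_
  have hγ2 : 0 < γ / 2 := by positivity
  set c : ℝ≥0∞ := (2 * (N : ℝ≥0∞) + 1) ^ (1 / q - 1 / p) with hc
  set A : ℝ≥0∞ := (weakCard (u - v) m N (γ / 2) : ℝ≥0∞) with hA
  set B : ℝ≥0∞ := (weakCard v m N (γ / 2) : ℝ≥0∞) with hB
  have hcard : (weakCard u m N γ : ℝ≥0∞) ≤ A + B := by
    rw [hA, hB, ← Nat.cast_add, Nat.cast_le]
    exact weakCard_subadd u v m N γ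
  have step1 : ((weakCard u m N γ : ℝ≥0∞)) ^ (1 / p) ≤ A ^ (1 / p) + B ^ (1 / p) :=
    le_trans (ENNReal.rpow_le_rpow hcard hinv0)
      (ENNReal.rpow_add_le_add_rpow A B hinv0 hinv1)
  have hγeq : (γ : ℝ≥0∞) = 2 * ((γ / 2 : ℝ≥0) : ℝ≥0∞) := by
    rw [← ENNReal.coe_ofNat, ← ENNReal.coe_mul, ENNReal.coe_inj]
    rw [mul_comm, div_mul_cancel₀ _ (two_ne_zero)]
  calc wTerm p q u m N γ = c * (γ : ℝ≥0∞) * ((weakCard u m N γ : ℝ≥0∞)) ^ (1 / p) := rfl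
    _ ≤ c * (γ : ℝ≥0∞) * (A ^ (1 / p) + B ^ (1 / p)) := by
        exact mul_le_mul_right step1 _
    _ = 2 * (c * ((γ / 2 : ℝ≥0) : ℝ≥0∞) * A ^ (1 / p))
        + 2 * (c * ((γ / 2 : ℝ≥0) : ℝ≥0∞) * B ^ (1 / p)) := by
        rw [hγeq]; ring
    _ = 2 * (wTerm p q (u - v) m N (γ / 2)) + 2 * (wTerm p q v m N (γ / 2)) := rfl
    _ ≤ 2 * wMorreyNorm p q (u - v) + 2 * wMorreyNorm p q v := by
        gcongr
        · exact wTerm_le_norm p q (u - v) m N hγ2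
        · exact wTerm_le_norm p q v m N hγ2
    _ = 2 * (wMorreyNorm p q (u - v) + wMorreyNorm p q v) := by ring

/-- Fatou-type lemma: the weak Morrey norm is lower semicontinuous along pointwise limits. -/
lemma norm_le_liminf (p q : ℝ) (hp : 1 ≤ p) (Y : ℕ → ℤ → ℂ) (y : ℤ → ℂ)
    (h : ∀ k, Tendsto (fun n => Y n k) atTop (𝓝 (y k))) :
    wMorreyNorm p q y ≤ liminf (fun n => wMorreyNorm p q (Y n)) atTop := by
  classical
  rw [norm_eq_iSup]
  refine iSup_le fun m => iSup_le fun N => iSup_le fun γ => iSup_le fun hγ => ?_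
  have hev : ∀ᶠ n in atTop, weakCard y m N γ ≤ weakCard (Y n) m N γ := by
    have : ∀ᶠ n in atTop, ∀ k ∈ (S m N).filter (fun k => γ < ‖y k‖₊),
        γ < ‖Y n k‖₊ := by
      rw [Finset.eventually_all]
      intro k hk
      simp only [Finset.mem_filter] at hk
      exact ((h k).nnnorm).eventually_const_lt hk.2
    filter_upwards [this] with n hn
    rw [weakCard_eq, weakCard_eq]
    refine Finset.card_le_card fun k hk => ?_
    simp only [Finset.mem_filter] at hk ⊢
    exact ⟨hk.1, hn k (by simp only [Finset.mem_filter]; exact hk)⟩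
  refine Filter.le_liminf_of_le (by isBoundedDefault) ?_
  filter_upwards [hev] with n hn
  have hinv0 : 0 ≤ 1 / p := by positivity
  calc wTerm p q y m N γ
      ≤ wTerm p q (Y n) m N γ := by
        unfold wTerm
        exact mul_le_mul_right (ENNReal.rpow_le_rpow (by exact_mod_cast hn) hinv0) _
    _ ≤ wMorreyNorm p q (Y n) := wTerm_le_norm p q (Y n) m N hγ

theorem stmt9 (p q : ℝ) (hp : 1 ≤ p) (hpq : p ≤ q) (X : ℕ → ℤ → ℂ)
    (hmem : ∀ n : ℕ, wMorreyNorm p q (X n) < ⊤)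
    (hcauchy : ∀ ε : ℝ, 0 < ε → ∃ n₀ : ℕ, ∀ i j : ℕ, n₀ ≤ i → n₀ ≤ j →
      wMorreyNorm p q (X i - X j) < ENNReal.ofReal ε) :
    ∃ x : ℤ → ℂ, wMorreyNorm p q x < ⊤ ∧
      ∀ ε : ℝ, 0 < ε → ∃ n₀ : ℕ, ∀ n : ℕ, n₀ ≤ n →
        wMorreyNorm p q (X n - x) < ENNReal.ofReal ε := by
  -- pointwise Cauchy
  have hptCauchy : ∀ k : ℤ, CauchySeq (fun n => X n k) := by
    intro k
    rw [Metric.cauchySeq_iff]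
    intro ε hε
    obtain ⟨n₀, hn₀⟩ := hcauchy ε hε
    refine ⟨n₀, fun i hi j hj => ?_⟩
    have h1 : (‖X i k - X j k‖₊ : ℝ≥0∞) ≤ wMorreyNorm p q (X i - X j) := by
      have := nnnorm_le_norm p q (X i - X j) k
      simpa using this
    have h2 : (‖X i k - X j k‖₊ : ℝ≥0∞) < ENNReal.ofReal ε :=
      lt_of_le_of_lt h1 (hn₀ i j hi hj)
    rw [← ENNReal.ofReal_coe_nnreal, coe_nnnorm, ENNReal.ofReal_lt_ofReal_iff hε] at h2
    rwa [dist_eq_norm]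
  have hlim : ∀ k : ℤ, ∃ l : ℂ, Tendsto (fun n => X n k) atTop (𝓝 l) :=
    fun k => cauchySeq_tendsto_of_complete (hptCauchy k)
  choose x hx using hlim
  refine ⟨x, ?_, ?_⟩
  · -- membership
    obtain ⟨n₀, hn₀⟩ := hcauchy 1 one_pos
    have hC : wMorreyNorm p q x ≤ liminf (fun n => wMorreyNorm p q (X n)) atTop :=
      norm_le_liminf p q hp X x hx
    have hbound : liminf (fun n => wMorreyNorm p q (X n)) atTop ≤
        2 * (ENNReal.ofReal 1 + wMorreyNorm p q (X n₀)) := by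
      refine Filter.liminf_le_of_frequently_le' ?_
      refine Eventually.frequently ?_
      filter_upwards [eventually_ge_atTop n₀] with n hn
      calc wMorreyNorm p q (X n)
          ≤ 2 * (wMorreyNorm p q (X n - X n₀) + wMorreyNorm p q (X n₀)) :=
            norm_quasi p q hp (X n) (X n₀)
        _ ≤ 2 * (ENNReal.ofReal 1 + wMorreyNorm p q (X n₀)) := by
            gcongr
            exact (hn₀ n n₀ hn le_rfl).le
    refine lt_of_le_of_lt (hC.trans hbound) ?_
    refine ENNReal.mul_lt_top (by norm_num) ?_
    exact ENNReal.add_lt_top.mpr ⟨by simp [ENNReal.ofReal_lt_top], hmem n₀⟩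
  · -- convergence
    intro ε hε
    obtain ⟨n₀, hn₀⟩ := hcauchy (ε / 2) (by positivity)
    refine ⟨n₀, fun n hn => ?_⟩
    have hpt : ∀ k, Tendsto (fun j => (X n - X j) k) atTop (𝓝 ((X n - x) k)) := by
      intro k
      simpa using (hx k).const_sub (X n k)
    have h1 : wMorreyNorm p q (X n - x) ≤
        liminf (fun j => wMorreyNorm p q (X n - X j)) atTop :=
      norm_le_liminf p q hp (fun j => X n - X j) (X n - x) hpt
    have h2 : liminf (fun j => wMorreyNorm p q (X n - X j)) atTop ≤
        ENNReal.ofReal (ε / 2) := by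
      refine Filter.liminf_le_of_frequently_le' ?_
      refine Eventually.frequently ?_
      filter_upwards [eventually_ge_atTop n₀] with j hj
      exact (hn₀ n j hn hj).le
    refine lt_of_le_of_lt (h1.trans h2) ?_
    rw [ENNReal.ofReal_lt_ofReal_iff hε]
    linarith
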